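/- Let c ≥ 0 and let (f_p)_{p≥1} be a sequence of nonnegative reals with f_1 = 0 and f_p ≤ c + (1/(p(p−1))) · Σ_{k=1}^{p−1} k·f_k for all p ≥ 2. Then f_p ≤ 2c for all p ≥ 1. -/

import Mathlib

lemma gauss_real (n : ℕ) : ∑ k ∈ Finset.Icc 1 n, (k:ℝ) = n*(n+1)/2 := by
  induction n with
  | zero => simp
  | succ n ih =>
    rw [Finset.sum_Icc_succ_top (by omega)]
    push_cast
    rw [ih]; ring

theorem stmt_4 (c : ℝ) (hc : 0 ≤ c) (f : ℕ → ℝ)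
    (hnonneg : ∀ p, 1 ≤ p → 0 ≤ f p) (h1 : f 1 = 0)
    (hrec : ∀ p : ℕ, 2 ≤ p →
      f p ≤ c + (1 / ((p : ℝ) * ((p : ℝ) - 1))) * ∑ k ∈ Finset.Icc 1 (p - 1), (k : ℝ) * f k) :
    ∀ p, 1 ≤ p → f p ≤ 2 * c := by
  intro p
  induction p using Nat.strong_induction_on with
  | _ p ih =>
    intro hp
    rcases eq_or_lt_of_le hp with h | h
    · rw [← h, h1]; linarith
    · have h2 : 2 ≤ p := h
      have hsum : ∑ k ∈ Finset.Icc 1 (p - 1), (k : ℝ) * f k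
            ≤ c * ((p:ℝ) * ((p:ℝ) - 1)) := by
        calc ∑ k ∈ Finset.Icc 1 (p - 1), (k : ℝ) * f k
            ≤ ∑ k ∈ Finset.Icc 1 (p - 1), (k : ℝ) * (2 * c) := by
              apply Finset.sum_le_sum
              intro k hk
              have hk1 : 1 ≤ k := (Finset.mem_Icc.mp hk).1
              have hkp : k < p := by
                have := (Finset.mem_Icc.mp hk).2; omega
              exact mul_le_mul_of_nonneg_left (ih k hkp hk1) (by positivity)
          _ = (∑ k ∈ Finset.Icc 1 (p - 1), (k : ℝ)) * (2 * c) := by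
              rw [Finset.sum_mul]
          _ = ((p:ℝ) - 1) * ((p:ℝ) - 1 + 1) / 2 * (2 * c) := by
              rw [gauss_real]
              have : ((p - 1 : ℕ) : ℝ) = (p:ℝ) - 1 := by
                have : 1 ≤ p := hp
                push_cast [Nat.cast_sub this]; ring
              rw [this]
          _ = c * ((p:ℝ) * ((p:ℝ) - 1)) := by ring
      have hpos : 0 < (p:ℝ) * ((p:ℝ) - 1) := by
        have : (2:ℝ) ≤ (p:ℝ) := by exact_mod_cast h2
        nlinarith
      have := hrec p h2
      calc f p ≤ c + (1 / ((p : ℝ) * ((p : ℝ) - 1))) *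
            ∑ k ∈ Finset.Icc 1 (p - 1), (k : ℝ) * f k := this
        _ ≤ c + (1 / ((p : ℝ) * ((p : ℝ) - 1))) * (c * ((p:ℝ) * ((p:ℝ) - 1))) := by
            apply add_le_add_right
            exact mul_le_mul_of_nonneg_left hsum (by positivity)
        _ = 2 * c := by rw [mul_left_comm (1 / _) c, one_div_mul_cancel hpos.ne', mul_one]; ring
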